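/- Let H be a finite hypergroup. If the quotient H//Z(H) of H over its center is weakly nilpotent, then H is weakly nilpotent (and conversely). -/

import Mathlib

/-- A hypergroup: a set with a hypermultiplication, identity and involution
satisfying (H1), (H2), (H3). -/
structure Hypergroup (H : Type*) where
  hmul : H → H → Set H
  one : H
  star : H → H
  assoc : ∀ p q r : H, (⋃ x ∈ hmul q r, hmul p x) = ⋃ x ∈ hmul p q, hmul x r
  hmul_one : ∀ s : H, hmul s one = {s}
  inv_left : ∀ p q r : H, r ∈ hmul p q → q ∈ hmul (star p) r
  inv_right : ∀ p q r : H, r ∈ hmul p q → p ∈ hmul r (star q)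

namespace Hypergroup

variable {H : Type*} (G : Hypergroup H)

/-- Complex (set) product: `AB = ⋃_{a ∈ A, b ∈ B} ab`. -/
def smul (A B : Set H) : Set H := ⋃ a ∈ A, ⋃ b ∈ B, G.hmul a b

/-- `A* = { a* | a ∈ A }`. -/
def sstar (A : Set H) : Set H := G.star '' A

/-- A nonempty subset `F` is closed if `F*F ⊆ F`. -/
def IsClosed (F : Set H) : Prop := F.Nonempty ∧ G.smul (G.sstar F) F ⊆ F

/-- `F` is normal in `K`: `Fk ⊆ kF` for all `k ∈ K`. -/
def IsNormalIn (F K : Set H) : Prop := ∀ k ∈ K, G.smul F {k} ⊆ G.smul {k} F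

/-- `F` is strongly normal in `K`: `k*Fk ⊆ F` for all `k ∈ K`. -/
def IsStronglyNormalIn (F K : Set H) : Prop :=
  ∀ k ∈ K, G.smul (G.smul {G.star k} F) {k} ⊆ F

/-- An element `s` is thin if `s*s = {1}`. -/
def IsThinElem (s : H) : Prop := G.hmul (G.star s) s = {G.one}

/-- A hypergroup is thin if all elements are thin. -/
def IsThin : Prop := ∀ s : H, G.IsThinElem s

/-- The center `Z(H) = {h | hx = xh for all x, h*h = {1}}`. -/
def center : Set H :=
  {h | (∀ x : H, G.hmul h x = G.hmul x h) ∧ G.hmul (G.star h) h = {G.one}}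

/-- The class `h^F := FhF`. -/
def cls (F : Set H) (h : H) : Set H := G.smul (G.smul F {h}) F

/-- The quotient set `H//F := { h^F | h ∈ H }`. -/
def quotSet (F : Set H) : Set (Set H) := Set.range (G.cls F)

/-- The class `h^F` as an element of `H//F`. -/
def qcls (F : Set H) (h : H) : G.quotSet F := ⟨G.cls F h, h, rfl⟩

/-- The full preimage in `H` of the center of the quotient `H//T`:
`{h | h^T ∈ Z(H//T)}`, i.e. `h^T` commutes with all classes `y^T` and
`(h^T)*(h^T) = {1^T} = {T}`. -/
def qCenterPre (T : Set H) : Set H :=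
  {h | (∀ y : H, G.cls T '' (G.smul (G.smul {h} T) {y}) =
          G.cls T '' (G.smul (G.smul {y} T) {h})) ∧
       G.cls T '' (G.smul (G.smul {G.star h} T) {h}) = {T}}

/-- The upper central series: `Z₀(H) = {1}`, and `Zᵢ₊₁(H)` is the full preimage
of `Z(H//Zᵢ(H))`, i.e. `Zᵢ₊₁(H)//Zᵢ(H) = Z(H//Zᵢ(H))`. -/
def upperCentral : ℕ → Set H
  | 0 => {G.one}
  | n + 1 => G.qCenterPre (upperCentral n)

/-- A hypergroup is weakly nilpotent if `Zₙ(H) = H` for some `n`. -/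
def WeaklyNilpotent : Prop := ∃ n : ℕ, G.upperCentral n = Set.univ

/-- `F` is subnormal in `K` via a chain of successively normal closed subsets. -/
def IsSubnormalIn (F K : Set H) : Prop :=
  ∃ n : ℕ, ∃ C : ℕ → Set H, C 0 = F ∧ C n = K ∧
    ∀ i < n, C i ⊆ C (i + 1) ∧ G.IsClosed (C (i + 1)) ∧ G.IsNormalIn (C i) (C (i + 1))

/-- The quotient `K//N` is thin: `(k^N)*(k^N) = {1^N}` for all `k ∈ K`. -/
def QuotThin (N K : Set H) : Prop :=
  ∀ k ∈ K, G.cls N '' (G.smul (G.smul {G.star k} N) {k}) = {N}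

/-- A residually-thin chain from `{1}` to `K`. -/
def RTChainOn (K : Set H) (n : ℕ) (C : ℕ → Set H) : Prop :=
  C 0 = {G.one} ∧ C n = K ∧
    ∀ i < n, C i ⊆ C (i + 1) ∧ G.IsClosed (C (i + 1)) ∧ G.QuotThin (C i) (C (i + 1))

/-- The valency `n_K = ∏ |Cᵢ₊₁//Cᵢ|` computed along some RT chain for `K`. -/
def HasValencyOn (K : Set H) (m : ℕ) : Prop :=
  ∃ n C, G.RTChainOn K n C ∧
    m = ∏ i ∈ Finset.range n, Nat.card (G.cls (C i) '' C (i + 1))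

/-- A closed `p`-subset: a closed subset whose valency is a power of `p`. -/
def PSubsetOn (p : ℕ) (K : Set H) : Prop :=
  G.IsClosed K ∧ ∃ m k : ℕ, G.HasValencyOn K m ∧ m = p ^ k

/-- `h` is `p`-valenced in `K`: for every subnormal closed `p`-subset `U` of `K`
such that `(h*)^U h^U` consists of thin elements of the quotient,
`n_{(h*)^U h^U} = |(h*)^U h^U|` is a power of `p`. -/
def PValencedElemOn (p : ℕ) (K : Set H) (h : H) : Prop :=
  ∀ U : Set H, G.IsClosed U → U ⊆ K → G.IsSubnormalIn U K → G.PSubsetOn p U →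
    (∀ x ∈ G.smul (G.smul {G.star h} U) {h},
      G.cls U '' (G.smul (G.smul {G.star x} U) {x}) = {U}) →
    ∃ k : ℕ, Nat.card (G.cls U '' (G.smul (G.smul {G.star h} U) {h})) = p ^ k

/-- `K` is `p`-valenced if all its elements are. -/
def PValencedOn (p : ℕ) (K : Set H) : Prop := ∀ h ∈ K, G.PValencedElemOn p K h

end Hypergroup

namespace Hypergroup

variable {H : Type*} (G : Hypergroup H)

lemma mem_smul' {A B : Set H} {u : H} :
    u ∈ G.smul A B ↔ ∃ a ∈ A, ∃ b ∈ B, u ∈ G.hmul a b := by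
  simp [smul]

lemma smul_singleton' (a b : H) : G.smul {a} {b} = G.hmul a b := by
  ext u; simp [smul]

lemma one_mem_star_hmul (s : H) : G.one ∈ G.hmul (G.star s) s :=
  G.inv_left s G.one s (by rw [G.hmul_one]; rfl)

lemma star_one' : G.star G.one = G.one := by
  have h := G.one_mem_star_hmul G.one
  rw [G.hmul_one] at h
  exact (Set.mem_singleton_iff.mp h).symm

lemma star_star' (s : H) : G.star (G.star s) = s := by
  have h := G.inv_left (G.star s) s G.one (G.one_mem_star_hmul s)
  rw [G.hmul_one] at h
  exact (Set.mem_singleton_iff.mp h).symm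

lemma one_mem_hmul_star (s : H) : G.one ∈ G.hmul s (G.star s) := by
  have h := G.one_mem_star_hmul (G.star s)
  rwa [G.star_star'] at h

lemma one_hmul' (x : H) : G.hmul G.one x = {x} := by
  ext u
  simp only [Set.mem_singleton_iff]
  constructor
  · intro hu
    have h1 : G.one ∈ G.hmul u (G.star x) := G.inv_right G.one x u hu
    have h2 : G.star x ∈ G.hmul (G.star u) G.one := G.inv_left u (G.star x) G.one h1
    rw [G.hmul_one] at h2
    have := congrArg G.star (Set.mem_singleton_iff.mp h2)
    rw [G.star_star', G.star_star'] at this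
    exact this.symm
  · rintro rfl
    have h1 := G.inv_right u (G.star u) G.one (G.one_mem_hmul_star u)
    rwa [G.star_star'] at h1

lemma hmul_nonempty' (p q : H) : (G.hmul p q).Nonempty := by
  have hp : p ∈ ⋃ x ∈ G.hmul q (G.star q), G.hmul p x := by
    refine Set.mem_biUnion (G.one_mem_hmul_star q) ?_
    rw [G.hmul_one]; rfl
  rw [G.assoc] at hp
  obtain ⟨x, hx⟩ := Set.mem_iUnion.mp hp
  obtain ⟨hx1, -⟩ := Set.mem_iUnion.mp hx
  exact ⟨x, hx1⟩

lemma star_mem' {p q u : H} (h : u ∈ G.hmul p q) :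
    G.star u ∈ G.hmul (G.star q) (G.star p) := by
  have h1 : q ∈ G.hmul (G.star p) u := G.inv_left p q u h
  have h2 : G.star p ∈ G.hmul q (G.star u) := G.inv_right (G.star p) u q h1
  exact G.inv_left q (G.star u) (G.star p) h2

lemma smul_assoc' (A B C : Set H) : G.smul (G.smul A B) C = G.smul A (G.smul B C) := by
  ext u
  simp only [G.mem_smul']
  constructor
  · rintro ⟨ab, ⟨a, ha, b, hb, hab⟩, c, hc, hu⟩
    have key : u ∈ ⋃ x ∈ G.hmul a b, G.hmul x c := Set.mem_biUnion hab hu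
    rw [← G.assoc] at key
    obtain ⟨x, hx, hux⟩ := Set.mem_iUnion₂.mp key
    exact ⟨a, ha, x, ⟨b, hb, c, hc, hx⟩, hux⟩
  · rintro ⟨a, ha, bc, ⟨b, hb, c, hc, hbc⟩, hu⟩
    have key : u ∈ ⋃ x ∈ G.hmul b c, G.hmul a x := Set.mem_biUnion hbc hu
    rw [G.assoc] at key
    obtain ⟨x, hx, hux⟩ := Set.mem_iUnion₂.mp key
    exact ⟨x, ⟨a, ha, b, hb, hx⟩, c, hc, hux⟩

lemma smul_mono' {A A' B B' : Set H} (hA : A ⊆ A') (hB : B ⊆ B') :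
    G.smul A B ⊆ G.smul A' B' := by
  intro u hu
  obtain ⟨a, ha, b, hb, hu⟩ := G.mem_smul'.mp hu
  exact G.mem_smul'.mpr ⟨a, hA ha, b, hB hb, hu⟩

lemma smul_one_right' (A : Set H) : G.smul A {G.one} = A := by
  ext u; simp [smul, G.hmul_one]

lemma smul_one_left' (A : Set H) : G.smul {G.one} A = A := by
  ext u; simp [smul, G.one_hmul']

lemma smul_nonempty' {A B : Set H} (hA : A.Nonempty) (hB : B.Nonempty) :
    (G.smul A B).Nonempty := by
  obtain ⟨a, ha⟩ := hA; obtain ⟨b, hb⟩ := hB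
  obtain ⟨u, hu⟩ := G.hmul_nonempty' a b
  exact ⟨u, G.mem_smul'.mpr ⟨a, ha, b, hb, hu⟩⟩

end Hypergroup

namespace Hypergroup

variable {H : Type*} (G : Hypergroup H)

lemma one_mem_center' : G.one ∈ G.center := by
  refine ⟨fun x => ?_, ?_⟩
  · rw [G.one_hmul', G.hmul_one]
  · rw [G.star_one', G.one_hmul']

lemma center_comm' {z : H} (hz : z ∈ G.center) (x : H) : G.hmul z x = G.hmul x z := hz.1 x

lemma center_thin' {z : H} (hz : z ∈ G.center) : G.hmul (G.star z) z = {G.one} := hz.2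

lemma center_thin_right {z : H} (hz : z ∈ G.center) : G.hmul z (G.star z) = {G.one} := by
  refine Set.eq_singleton_iff_nonempty_unique_mem.mpr ⟨G.hmul_nonempty' z (G.star z), ?_⟩
  intro u hu
  have h1 : z ∈ G.hmul u z := by
    have := G.inv_right z (G.star z) u hu
    rwa [G.star_star'] at this
  rw [← G.center_comm' hz] at h1
  have h2 : u ∈ G.hmul (G.star z) z := G.inv_left z u z h1
  rw [G.center_thin' hz] at h2
  exact h2

lemma star_center' {z : H} (hz : z ∈ G.center) : G.star z ∈ G.center := by
  constructor
  · intro x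
    ext u
    constructor
    · intro hu
      have h1 := G.star_mem' hu
      rw [G.star_star', ← G.center_comm' hz] at h1
      have h2 := G.star_mem' h1
      rwa [G.star_star', G.star_star'] at h2
    · intro hu
      have h1 := G.star_mem' hu
      rw [G.star_star', G.center_comm' hz] at h1
      have h2 := G.star_mem' h1
      rwa [G.star_star', G.star_star'] at h2
  · rw [G.star_star']
    exact G.center_thin_right hz

lemma center_hmul_singleton {z : H} (hz : z ∈ G.center) (a u : H) (hu : u ∈ G.hmul z a) :
    G.hmul z a = {u} := by
  refine Set.eq_singleton_iff_nonempty_unique_mem.mpr ⟨⟨u, hu⟩, ?_⟩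
  intro t ht
  have ha : a ∈ G.hmul (G.star z) u := G.inv_left z a u hu
  have key : G.smul {z} (G.smul {G.star z} {u}) = {u} := by
    rw [← G.smul_assoc', G.smul_singleton', G.center_thin_right hz, G.smul_one_left']
  have : t ∈ G.smul {z} (G.smul {G.star z} {u}) := by
    rw [G.smul_singleton']
    exact G.mem_smul'.mpr ⟨z, rfl, a, ha, ht⟩
  rwa [key] at this

lemma hmul_center_center {z w : H} (hz : z ∈ G.center) (hw : w ∈ G.center) :
    G.hmul z w ⊆ G.center := by
  intro u hu
  have hzw : G.hmul z w = {u} := G.center_hmul_singleton hz w u hu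
  constructor
  · intro x
    have : G.smul (G.hmul z w) {x} = G.smul {x} (G.hmul z w) := by
      rw [← G.smul_singleton' z w, G.smul_assoc', G.smul_singleton' w x,
        G.center_comm' hw x, ← G.smul_singleton' x w, ← G.smul_assoc',
        G.smul_singleton' z x, G.center_comm' hz x, ← G.smul_singleton' x z,
        G.smul_assoc']
    rw [hzw, G.smul_singleton', G.smul_singleton'] at this
    exact this
  · have hus : G.star u ∈ G.hmul (G.star w) (G.star z) := G.star_mem' hu
    have hsub : G.smul {G.star u} {u} ⊆
        G.smul (G.hmul (G.star w) (G.star z)) (G.hmul z w) :=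
      G.smul_mono' (Set.singleton_subset_iff.mpr hus) (Set.singleton_subset_iff.mpr hu)
    have key : G.smul (G.hmul (G.star w) (G.star z)) (G.hmul z w) = {G.one} := by
      rw [← G.smul_singleton' (G.star w) (G.star z), ← G.smul_singleton' z w,
        G.smul_assoc', ← G.smul_assoc' {G.star z}, G.smul_singleton' (G.star z) z,
        G.center_thin' hz, G.smul_one_left', G.smul_singleton', G.center_thin' hw]
    rw [G.smul_singleton'] at hsub
    rw [key] at hsub
    exact Set.eq_singleton_iff_nonempty_unique_mem.mpr
      ⟨G.hmul_nonempty' _ _, fun t ht => hsub ht⟩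

lemma center_smul_comm' (A : Set H) : G.smul G.center A = G.smul A G.center := by
  ext u
  simp only [G.mem_smul']
  constructor
  · rintro ⟨z, hz, a, ha, hu⟩
    exact ⟨a, ha, z, hz, by rwa [← G.center_comm' hz]⟩
  · rintro ⟨a, ha, z, hz, hu⟩
    exact ⟨z, hz, a, ha, by rwa [G.center_comm' hz]⟩

lemma center_smul_center' : G.smul G.center G.center = G.center := by
  apply Set.Subset.antisymm
  · intro u hu
    obtain ⟨z, hz, w, hw, hu⟩ := G.mem_smul'.mp hu
    exact G.hmul_center_center hz hw hu
  · intro z hz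
    exact G.mem_smul'.mpr ⟨G.one, G.one_mem_center', z, hz, by rw [G.one_hmul']; rfl⟩

end Hypergroup

namespace Hypergroup

variable {H : Type*} (G : Hypergroup H)

lemma mem_center_smul_self (h : H) : h ∈ G.smul G.center {h} :=
  G.mem_smul'.mpr ⟨G.one, G.one_mem_center', h, rfl, by rw [G.one_hmul']; rfl⟩

lemma cls_center_eq (h : H) : G.cls G.center h = G.smul G.center {h} := by
  rw [cls, G.smul_assoc', ← G.center_smul_comm' {h}, ← G.smul_assoc',
    G.center_smul_center']

lemma center_smul_sub {z a b : H} (hz : z ∈ G.center) (hab : a ∈ G.hmul z b) :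
    G.smul G.center {a} ⊆ G.smul G.center {b} := by
  have h1 : G.smul G.center {a} ⊆ G.smul G.center (G.smul {z} {b}) := by
    apply G.smul_mono' (le_refl _)
    rw [G.smul_singleton']
    exact Set.singleton_subset_iff.mpr hab
  rw [← G.smul_assoc'] at h1
  have h2 : G.smul G.center {z} ⊆ G.center := by
    have h3 := G.smul_mono' (le_refl G.center) (Set.singleton_subset_iff.mpr hz)
    rwa [G.center_smul_center'] at h3
  exact h1.trans (G.smul_mono' h2 (le_refl _))

lemma qcls_eq_iff {a b : H} :
    G.qcls G.center a = G.qcls G.center b ↔ a ∈ G.smul G.center {b} := by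
  rw [Subtype.ext_iff]
  show G.cls G.center a = G.cls G.center b ↔ _
  rw [G.cls_center_eq, G.cls_center_eq]
  constructor
  · intro h; rw [← h]; exact G.mem_center_smul_self a
  · intro h
    obtain ⟨z, hz, b', hb', hab⟩ := G.mem_smul'.mp h
    rw [Set.mem_singleton_iff] at hb'; subst hb'
    apply Set.Subset.antisymm (G.center_smul_sub hz hab)
    exact G.center_smul_sub (G.star_center' hz) (G.inv_left z b' a hab)

lemma qcls_surjective : Function.Surjective (G.qcls G.center) := by
  rintro ⟨S, h, hh⟩
  exact ⟨h, Subtype.ext hh⟩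

/-- `S` is saturated for the center classes. -/
def Sat (S : Set H) : Prop :=
  ∀ ⦃u t : H⦄, t ∈ S → G.qcls G.center u = G.qcls G.center t → u ∈ S

lemma sat_image_inj {A B : Set H} (hA : G.Sat A) (hB : G.Sat B)
    (h : G.qcls G.center '' A = G.qcls G.center '' B) : A = B := by
  ext x
  constructor
  · intro hx
    have : G.qcls G.center x ∈ G.qcls G.center '' B := h ▸ Set.mem_image_of_mem _ hx
    obtain ⟨b, hb, hbx⟩ := this
    exact hB hb hbx.symm
  · intro hx
    have : G.qcls G.center x ∈ G.qcls G.center '' A := h.symm ▸ Set.mem_image_of_mem _ hx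
    obtain ⟨a, ha, hax⟩ := this
    exact hA ha hax.symm

lemma sat_preimage (Q' : Set (G.quotSet G.center)) : G.Sat (G.qcls G.center ⁻¹' Q') := by
  intro u t ht hut
  simp only [Set.mem_preimage] at *
  rwa [hut]

lemma center_smul_sat {T : Set H} (hT : G.Sat T) : G.smul G.center T = T := by
  apply Set.Subset.antisymm
  · intro u hu
    obtain ⟨z, hz, t, ht, hu⟩ := G.mem_smul'.mp hu
    refine hT ht (G.qcls_eq_iff.mpr ?_)
    exact G.mem_smul'.mpr ⟨z, hz, t, rfl, hu⟩
  · intro t ht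
    exact G.mem_smul'.mpr ⟨G.one, G.one_mem_center', t, ht, by rw [G.one_hmul']; rfl⟩

lemma smul_center_sat {T : Set H} (hT : G.Sat T) : G.smul T G.center = T := by
  rw [← G.center_smul_comm']
  exact G.center_smul_sat hT

lemma sat_cls {T : Set H} (hT : G.Sat T) (x : H) : G.Sat (G.cls T x) := by
  intro u t ht hut
  have hu : u ∈ G.smul G.center {t} := G.qcls_eq_iff.mp hut
  have key : G.smul G.center (G.cls T x) = G.cls T x := by
    rw [cls, ← G.smul_assoc', ← G.smul_assoc', G.center_smul_sat hT]
  rw [← key]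
  exact G.smul_mono' (le_refl _) (Set.singleton_subset_iff.mpr ht) hu

lemma cls_one (x : H) : G.cls {G.one} x = {x} := by
  rw [cls, G.smul_one_right', G.smul_one_left']

lemma cls_one_fun : G.cls {G.one} = fun x => ({x} : Set H) := funext fun x => G.cls_one x

lemma qCenterPre_one : G.qCenterPre {G.one} = G.center := by
  ext h
  simp only [qCenterPre, Set.mem_setOf_eq, G.cls_one_fun, G.smul_one_right',
    G.smul_singleton']
  constructor
  · rintro ⟨ha, hb⟩
    constructor
    · intro x
      exact Set.image_eq_image Set.singleton_injective |>.mp (ha x)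
    · have : (fun x => ({x} : Set H)) '' {G.one} = {({G.one} : Set H)} := by
        rw [Set.image_singleton]
      rw [← this] at hb
      exact Set.image_eq_image Set.singleton_injective |>.mp hb
  · rintro ⟨ha, hb⟩
    constructor
    · intro y; rw [ha y]
    · rw [hb, Set.image_singleton]

lemma cls_univ (x : H) : G.cls Set.univ x = Set.univ := by
  apply Set.eq_univ_of_forall
  intro u
  obtain ⟨a, ha⟩ := G.hmul_nonempty' u (G.star x)
  have hu : u ∈ G.hmul a x := by
    have := G.inv_right u (G.star x) a ha
    rwa [G.star_star'] at this
  refine G.mem_smul'.mpr ⟨u, ?_, G.one, trivial, by rw [G.hmul_one]; rfl⟩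
  exact G.mem_smul'.mpr ⟨a, trivial, x, rfl, hu⟩

lemma qCenterPre_univ : G.qCenterPre Set.univ = Set.univ := by
  apply Set.eq_univ_of_forall
  intro h
  have hcls : G.cls Set.univ = fun _ => (Set.univ : Set H) := funext fun x => G.cls_univ x
  have himg : ∀ S : Set H, S.Nonempty → G.cls Set.univ '' S = {Set.univ} := by
    intro S hS
    rw [hcls]
    exact hS.image_const _
  have hne : ∀ a b : H, (G.smul (G.smul {a} Set.univ) {b}).Nonempty :=
    fun a b => G.smul_nonempty' (G.smul_nonempty' ⟨a, rfl⟩ ⟨G.one, trivial⟩) ⟨b, rfl⟩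
  exact ⟨fun y => by rw [himg _ (hne h y), himg _ (hne y h)], himg _ (hne _ h)⟩

end Hypergroup

namespace Hypergroup

variable {H : Type*} (G : Hypergroup H) (Q : Hypergroup (G.quotSet G.center))

lemma Qhmul_eq
    (hQmul : ∀ a b : H, Q.hmul (G.qcls G.center a) (G.qcls G.center b) =
      {x : G.quotSet G.center |
        ∃ y ∈ G.smul (G.smul {a} G.center) {b}, x = G.qcls G.center y})
    (a b : H) :
    Q.hmul (G.qcls G.center a) (G.qcls G.center b)
      = G.qcls G.center '' (G.smul (G.smul {a} G.center) {b}) := by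
  rw [hQmul]
  ext x
  constructor
  · rintro ⟨y, hy, rfl⟩; exact ⟨y, hy, rfl⟩
  · rintro ⟨y, hy, rfl⟩; exact ⟨y, hy, rfl⟩

lemma Qsmul_image
    (hQmul : ∀ a b : H, Q.hmul (G.qcls G.center a) (G.qcls G.center b) =
      {x : G.quotSet G.center |
        ∃ y ∈ G.smul (G.smul {a} G.center) {b}, x = G.qcls G.center y})
    (A B : Set H) :
    Q.smul (G.qcls G.center '' A) (G.qcls G.center '' B)
      = G.qcls G.center '' (G.smul (G.smul A G.center) B) := by
  ext X
  constructor
  · intro hX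
    obtain ⟨P, hP, R, hR, hX⟩ := Q.mem_smul'.mp hX
    obtain ⟨a, ha, rfl⟩ := hP
    obtain ⟨b, hb, rfl⟩ := hR
    rw [G.Qhmul_eq Q hQmul] at hX
    obtain ⟨v, hv, rfl⟩ := hX
    refine Set.mem_image_of_mem _ ?_
    exact G.smul_mono' (G.smul_mono' (Set.singleton_subset_iff.mpr ha) (le_refl _))
      (Set.singleton_subset_iff.mpr hb) hv
  · rintro ⟨v, hv, rfl⟩
    obtain ⟨c, hc, b, hb, hvb⟩ := G.mem_smul'.mp hv
    obtain ⟨a, ha, z, hz, hcz⟩ := G.mem_smul'.mp hc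
    refine Q.mem_smul'.mpr ⟨G.qcls G.center a, Set.mem_image_of_mem _ ha,
      G.qcls G.center b, Set.mem_image_of_mem _ hb, ?_⟩
    rw [G.Qhmul_eq Q hQmul]
    exact Set.mem_image_of_mem _
      (G.mem_smul'.mpr ⟨c, G.mem_smul'.mpr ⟨a, rfl, z, hz, hcz⟩, b, rfl, hvb⟩)

lemma Qcls_image
    (hQmul : ∀ a b : H, Q.hmul (G.qcls G.center a) (G.qcls G.center b) =
      {x : G.quotSet G.center |
        ∃ y ∈ G.smul (G.smul {a} G.center) {b}, x = G.qcls G.center y})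
    {T : Set H} (hT : G.Sat T) (x : H) :
    Q.cls (G.qcls G.center '' T) (G.qcls G.center x)
      = G.qcls G.center '' (G.cls T x) := by
  have h1 : ({G.qcls G.center x} : Set (G.quotSet G.center)) = G.qcls G.center '' {x} :=
    (Set.image_singleton).symm
  rw [cls, h1, G.Qsmul_image Q hQmul, G.Qsmul_image Q hQmul]
  rw [G.smul_center_sat hT, G.smul_assoc' T {x} G.center, ← G.center_smul_comm' {x},
    ← G.smul_assoc' T G.center {x}, G.smul_center_sat hT, cls]

lemma image_image_inj {A B : Set (Set H)} (hA : ∀ S ∈ A, G.Sat S) (hB : ∀ S ∈ B, G.Sat S)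
    (h : Set.image (G.qcls G.center) '' A = Set.image (G.qcls G.center) '' B) : A = B := by
  ext S
  constructor
  · intro hS
    have hmem : G.qcls G.center '' S ∈ Set.image (G.qcls G.center) '' B :=
      h ▸ Set.mem_image_of_mem _ hS
    obtain ⟨S', hS', hSS⟩ := hmem
    exact (G.sat_image_inj (hB S' hS') (hA S hS) hSS) ▸ hS'
  · intro hS
    have hmem : G.qcls G.center '' S ∈ Set.image (G.qcls G.center) '' A :=
      h.symm ▸ Set.mem_image_of_mem _ hS
    obtain ⟨S', hS', hSS⟩ := hmem
    exact (G.sat_image_inj (hA S' hS') (hB S hS) hSS) ▸ hS'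

lemma qCenterPre_preimage
    (hQmul : ∀ a b : H, Q.hmul (G.qcls G.center a) (G.qcls G.center b) =
      {x : G.quotSet G.center |
        ∃ y ∈ G.smul (G.smul {a} G.center) {b}, x = G.qcls G.center y})
    (hQstar : ∀ h : H, Q.star (G.qcls G.center h) = G.qcls G.center (G.star h))
    (Q' : Set (G.quotSet G.center)) :
    G.qCenterPre (G.qcls G.center ⁻¹' Q') = G.qcls G.center ⁻¹' (Q.qCenterPre Q') := by
  have hT : G.Sat (G.qcls G.center ⁻¹' Q') := G.sat_preimage Q'
  have hQ'T : G.qcls G.center '' (G.qcls G.center ⁻¹' Q') = Q' :=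
    Set.image_preimage_eq Q' G.qcls_surjective
  generalize hTg : G.qcls G.center ⁻¹' Q' = T at hT hQ'T ⊢
  have key : ∀ a b : H, Q.smul (Q.smul {G.qcls G.center a} Q') {G.qcls G.center b}
      = G.qcls G.center '' (G.smul (G.smul {a} T) {b}) := by
    intro a b
    rw [show ({G.qcls G.center a} : Set (G.quotSet G.center)) = G.qcls G.center '' {a} from
        (Set.image_singleton).symm,
      show ({G.qcls G.center b} : Set (G.quotSet G.center)) = G.qcls G.center '' {b} from
        (Set.image_singleton).symm,
      ← hQ'T, G.Qsmul_image Q hQmul, G.Qsmul_image Q hQmul]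
    rw [G.smul_assoc' {a} G.center _, G.center_smul_sat hT,
      G.smul_assoc' {a} _ G.center, G.smul_center_sat hT]
  have keycls : ∀ s : H, Q.cls Q' (G.qcls G.center s)
      = G.qcls G.center '' (G.cls T s) := by
    intro s
    rw [← hQ'T, G.Qcls_image Q hQmul hT s]
  have imgcomp : ∀ S : Set H, Q.cls Q' '' (G.qcls G.center '' S)
      = Set.image (G.qcls G.center) '' (G.cls T '' S) := by
    intro S
    rw [← Set.image_comp, ← Set.image_comp]
    exact Set.image_congr fun s _ => keycls s
  have satcls : ∀ (S : Set H), ∀ W ∈ G.cls T '' S, G.Sat W := by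
    rintro S W ⟨s, -, rfl⟩
    exact G.sat_cls hT s
  have satsing : ∀ W ∈ ({T} : Set (Set H)), G.Sat W := by
    rintro W hW
    rw [Set.mem_singleton_iff] at hW
    subst hW
    exact hT
  have esing : ({Q'} : Set (Set (G.quotSet G.center)))
      = Set.image (G.qcls G.center) '' {T} := by
    rw [Set.image_singleton, hQ'T]
  ext h
  simp only [qCenterPre, Set.mem_preimage, Set.mem_setOf_eq]
  constructor
  · rintro ⟨ha, hb⟩
    constructor
    · intro Y
      obtain ⟨y, rfl⟩ := G.qcls_surjective Y
      rw [key, key, imgcomp, imgcomp, ha y]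
    · rw [hQstar h, key, imgcomp, hb, esing, Set.image_singleton]
  · rintro ⟨ha, hb⟩
    constructor
    · intro y
      have h1 := ha (G.qcls G.center y)
      rw [key, key, imgcomp, imgcomp] at h1
      exact G.image_image_inj (satcls _) (satcls _) h1
    · have h1 := hb
      rw [hQstar h, key, imgcomp, esing] at h1
      exact G.image_image_inj (satcls _) satsing h1

end Hypergroup

namespace Hypergroup

variable {H : Type*} (G : Hypergroup H)

lemma smul_center_one : G.smul G.center {G.one} = G.center := by
  ext u
  simp only [G.mem_smul']
  constructor
  · rintro ⟨z, hz, b, hb, hu⟩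
    rw [Set.mem_singleton_iff] at hb; subst hb
    rw [G.hmul_one] at hu
    rwa [Set.mem_singleton_iff.mp hu]
  · intro hu
    exact ⟨u, hu, G.one, rfl, by rw [G.hmul_one]; rfl⟩

end Hypergroup

/-- for a finite hypergroup `H`, the quotient `H//Z(H)` is
weakly nilpotent iff `H` is weakly nilpotent. -/
theorem quot_center_weaklyNilpotent_iff {H : Type*} [Finite H] (G : Hypergroup H)
    (Q : Hypergroup (G.quotSet G.center))
    (hmul : ∀ a b : H, Q.hmul (G.qcls G.center a) (G.qcls G.center b) =
      {x : G.quotSet G.center |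
        ∃ y ∈ G.smul (G.smul {a} G.center) {b}, x = G.qcls G.center y})
    (hone : Q.one = G.qcls G.center G.one)
    (hstar : ∀ h : H, Q.star (G.qcls G.center h) = G.qcls G.center (G.star h)) :
    Q.WeaklyNilpotent ↔ G.WeaklyNilpotent := by
  have main : ∀ n : ℕ, G.upperCentral (n + 1) = G.qcls G.center ⁻¹' (Q.upperCentral n) := by
    intro n
    induction n with
    | zero =>
      show G.qCenterPre (G.upperCentral 0) = _
      rw [show G.upperCentral 0 = {G.one} from rfl, G.qCenterPre_one]
      ext h
      show h ∈ G.center ↔ G.qcls G.center h ∈ ({Q.one} : Set (G.quotSet G.center))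
      rw [Set.mem_singleton_iff, hone, G.qcls_eq_iff, G.smul_center_one]
    | succ n ih =>
      show G.qCenterPre (G.upperCentral (n + 1)) = _
      rw [ih, G.qCenterPre_preimage Q hmul hstar]
      rfl
  constructor
  · rintro ⟨n, hn⟩
    refine ⟨n + 1, ?_⟩
    rw [main n, hn]
    exact Set.preimage_univ
  · rintro ⟨n, hn⟩
    refine ⟨n, ?_⟩
    have h2 : G.upperCentral (n + 1) = Set.univ := by
      show G.qCenterPre (G.upperCentral n) = _
      rw [hn, G.qCenterPre_univ]
    rw [main n] at h2
    apply Set.eq_univ_of_forall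
    intro Y
    obtain ⟨y, rfl⟩ := G.qcls_surjective Y
    have hy : y ∈ G.qcls G.center ⁻¹' (Q.upperCentral n) := by rw [h2]; trivial
    exact hy
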